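/- Fix k ≥ 2, a ∈ ℕ, and δ = (δ₁,...,δ_k) ∈ {0,1}^k with a - |δ| a nonnegative even integer, where |δ| = Σδᵢ. The number of weakly increasing sequences of length a with entries in {1,...,k} such that the entry 1 occurs at most once and, for each i, the number of occurrences of i is congruent to δᵢ mod 2, equals the binomial coefficient C((a-|δ|)/2 + k - 2, k - 2). -/

import Mathlib

private lemma card_filter_eq_count : ∀ {a : ℕ} (w : Fin a → ℕ) (v : ℕ),
    (Finset.univ.filter fun t => w t = v).card = (List.ofFn w).count v
  | 0, w, v => by
    rw [List.ofFn_zero, List.count_nil, Finset.card_eq_zero, Finset.filter_eq_empty_iff]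
    exact fun t => t.elim0
  | a + 1, w, v => by
    rw [List.ofFn_succ, List.count_cons, ← card_filter_eq_count (fun j => w j.succ) v]
    simp only [Finset.card_filter, Fin.sum_univ_succ, beq_iff_eq]
    by_cases h : w 0 = v <;> simp [h] <;> omega

private def mkList {k : ℕ} (m : Fin k → ℕ) : List ℕ :=
  (List.finRange k).flatMap fun i => List.replicate (m i) ((i : ℕ) + 1)

private lemma mkList_length {k : ℕ} (m : Fin k → ℕ) : (mkList m).length = ∑ i, m i := by
  rw [mkList, List.length_flatMap, ← List.ofFn_eq_map, Fin.sum_ofFn]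
  simp

private lemma mkList_sorted {k : ℕ} (m : Fin k → ℕ) : (mkList m).Pairwise (· ≤ ·) := by
  rw [mkList, List.pairwise_flatMap]
  refine ⟨fun i _ => ?_, ?_⟩
  · exact List.pairwise_replicate.2 (Or.inr le_rfl)
  · refine (List.pairwise_lt_finRange k).imp ?_
    intro i j hij x hx y hy
    rw [List.eq_of_mem_replicate hx, List.eq_of_mem_replicate hy]
    omega

private lemma mkList_mem {k : ℕ} (m : Fin k → ℕ) {x : ℕ} (hx : x ∈ mkList m) :
    1 ≤ x ∧ x ≤ k := by
  rw [mkList, List.mem_flatMap] at hx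
  obtain ⟨i, -, hx⟩ := hx
  rw [List.eq_of_mem_replicate hx]
  omega

private lemma mkList_count {k : ℕ} (m : Fin k → ℕ) (i₀ : Fin k) :
    (mkList m).count ((i₀ : ℕ) + 1) = m i₀ := by
  rw [mkList, List.count_flatMap, ← List.ofFn_eq_map, Fin.sum_ofFn]
  have : ∀ i : Fin k, (List.replicate (m i) ((i : ℕ) + 1)).count ((i₀ : ℕ) + 1)
      = if i = i₀ then m i else 0 := by
    intro i
    rw [List.count_replicate]
    by_cases h : i = i₀
    · simp [h]
    · have : ¬ ((i : ℕ) + 1 == (i₀ : ℕ) + 1) := by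
        simp [Fin.val_eq_val, h]
      simp [this, h]
  simp only [Function.comp, this]
  simp

private lemma sum_counts {k a : ℕ} (w : Fin a → ℕ) (hw : ∀ t, 1 ≤ w t ∧ w t ≤ k) :
    ∑ i : Fin k, (Finset.univ.filter fun t => w t = (i : ℕ) + 1).card = a := by
  have h : ∀ t : Fin a, w t - 1 < k := fun t => by have := hw t; omega
  have key := Finset.card_eq_sum_card_fiberwise (s := (Finset.univ : Finset (Fin a)))
    (t := (Finset.univ : Finset (Fin k)))
    (f := fun t : Fin a => (⟨w t - 1, h t⟩ : Fin k))
    (fun x _ => Finset.mem_univ _)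
  rw [Finset.card_univ, Fintype.card_fin] at key
  refine Eq.trans ?_ key.symm
  refine Finset.sum_congr rfl fun i _ => ?_
  congr 1
  refine Finset.filter_congr fun t _ => ?_
  have := hw t
  simp only [Fin.ext_iff]
  constructor <;> intro h' <;> omega

private lemma sum_count_univ {α : Type*} [Fintype α] [DecidableEq α] (s : Multiset α) :
    ∑ i, s.count i = Multiset.card s :=
  Multiset.sum_count_eq_card fun a _ => Finset.mem_univ a

/-- Equiv between tuples with fixed sum and symmetric powers. -/
private def sumTupleEquivSym (r n : ℕ) :
    {c : Fin r → ℕ // ∑ i, c i = n} ≃ Sym (Fin r) n where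
  toFun c := ⟨∑ i, Multiset.replicate (c.1 i) i, by
    rw [← sum_count_univ]
    have hcount : ∀ j : Fin r, (∑ i, Multiset.replicate (c.1 i) i).count j = c.1 j := by
      intro j
      rw [Multiset.count_sum']
      simp [Multiset.count_replicate]
    simp only [hcount]
    exact c.2⟩
  invFun s := ⟨fun i => s.1.count i, by rw [sum_count_univ, s.2]⟩
  left_inv c := by
    ext i
    simp only [Multiset.count_sum', Multiset.count_replicate]
    simp [Finset.sum_ite_eq]
  right_inv s := by
    refine Subtype.ext (Multiset.ext.2 fun j => ?_)
    simp only [Multiset.count_sum', Multiset.count_replicate]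
    simp [Finset.sum_ite_eq]

private lemma card_sumTuple (r n : ℕ) :
    Nat.card {c : Fin r → ℕ // ∑ i, c i = n} = (r + n - 1).choose n := by
  rw [Nat.card_congr (sumTupleEquivSym r n), Nat.card_eq_fintype_card,
    Sym.card_sym_fin_eq_multichoose, Nat.multichoose_eq]

theorem one_row_ok_branching (k a : ℕ) (hk : 2 ≤ k)
    (δ : Fin k → ℕ) (hδ : ∀ i, δ i ≤ 1)
    (hle : ∑ i, δ i ≤ a) (heven : 2 ∣ (a - ∑ i, δ i)) :
    Nat.card {w : Fin a → ℕ //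
      Monotone w ∧
      (∀ t, 1 ≤ w t ∧ w t ≤ k) ∧
      (Finset.univ.filter (fun t => w t = 1)).card ≤ 1 ∧
      (∀ i : Fin k,
        (Finset.univ.filter (fun t => w t = (i : ℕ) + 1)).card % 2 = δ i)}
    = ((a - ∑ i, δ i) / 2 + k - 2).choose (k - 2) := by
  obtain ⟨k', rfl⟩ : ∃ k', k = k' + 2 := ⟨k - 2, by omega⟩
  set N := (a - ∑ i, δ i) / 2 with hN
  clear_value N
  -- Step 1: bijection with multiplicity vectors
  have step1 : Nat.card {w : Fin a → ℕ //
      Monotone w ∧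
      (∀ t, 1 ≤ w t ∧ w t ≤ (k' + 2)) ∧
      (Finset.univ.filter (fun t => w t = 1)).card ≤ 1 ∧
      (∀ i : Fin (k' + 2),
        (Finset.univ.filter (fun t => w t = (i : ℕ) + 1)).card % 2 = δ i)}
      = Nat.card {m : Fin (k' + 2) → ℕ // ∑ i, m i = a ∧ m 0 ≤ 1 ∧ ∀ i, m i % 2 = δ i} := by
    refine Nat.card_eq_of_bijective (fun w => ⟨fun i =>
      (Finset.univ.filter fun t => w.1 t = (i : ℕ) + 1).card, ?_, ?_, w.2.2.2.2⟩) ⟨?_, ?_⟩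
    · exact sum_counts w.1 w.2.2.1
    · simpa using w.2.2.2.1
    · -- injective
      rintro ⟨w, hw⟩ ⟨w', hw'⟩ h
      have hcount : ∀ i : Fin (k' + 2),
          (Finset.univ.filter fun t => w t = (i : ℕ) + 1).card
          = (Finset.univ.filter fun t => w' t = (i : ℕ) + 1).card := by
        intro i
        exact congrArg (fun f => f i) (congrArg Subtype.val h)
      apply Subtype.ext
      apply List.ofFn_injective
      refine List.Perm.eq_of_sortedLE
        ((List.sortedLE_ofFn_iff).2 hw.1) ((List.sortedLE_ofFn_iff).2 hw'.1) (List.perm_iff_count.2 fun v => ?_)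
      by_cases hv : 1 ≤ v ∧ v ≤ (k' + 2)
      · have hvk : v - 1 < (k' + 2) := by omega
        have hveq : v = ((⟨v - 1, hvk⟩ : Fin (k' + 2)) : ℕ) + 1 := by simp; omega
        rw [hveq, ← card_filter_eq_count, ← card_filter_eq_count]
        exact hcount _
      · rw [List.count_eq_zero_of_not_mem, List.count_eq_zero_of_not_mem]
        · intro hmem
          rw [List.mem_ofFn] at hmem
          obtain ⟨t, rfl⟩ := hmem
          exact hv (hw'.2.1 t)
        · intro hmem
          rw [List.mem_ofFn] at hmem
          obtain ⟨t, rfl⟩ := hmem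
          exact hv (hw.2.1 t)
    · -- surjective
      rintro ⟨m, hsum, h0, hmod⟩
      have hlen : (mkList m).length = a := by rw [mkList_length, hsum]
      set w : Fin a → ℕ := fun t => (mkList m).get (Fin.cast hlen.symm t) with hwdef
      have hofn : List.ofFn w = mkList m := by
        refine List.ext_get (by simp [hlen]) fun n h1 h2 => ?_
        simp [hwdef]
      have hcnt : ∀ i : Fin (k' + 2),
          (Finset.univ.filter fun t => w t = (i : ℕ) + 1).card = m i := by
        intro i
        rw [card_filter_eq_count, hofn, mkList_count]
      have hrange : ∀ t, 1 ≤ w t ∧ w t ≤ (k' + 2) := by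
        intro t
        exact mkList_mem m (List.get_mem _ _)
      have hmono : Monotone w := by
        intro s t hst
        exact (List.sortedLE_iff_pairwise.2 (mkList_sorted m)) (by simpa using hst)
      refine ⟨⟨w, hmono, hrange, ?_, fun i => by rw [hcnt i]; exact hmod i⟩, ?_⟩
      · have h' := hcnt 0
        simp only [Fin.val_zero, Nat.zero_add] at h'
        rw [h']; exact h0
      · exact Subtype.ext (funext fun i => hcnt i)
  rw [step1]
  clear step1
  -- Step 2: bijection with ((k' + 2)-1)-tuples summing to N
  have step2 : Nat.card {m : Fin (k' + 2) → ℕ // ∑ i, m i = a ∧ m 0 ≤ 1 ∧ ∀ i, m i % 2 = δ i}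
      = Nat.card {c : Fin (k' + 1) → ℕ // ∑ j, c j = N} := by
    have linv : ∀ (m : Fin (k' + 2) → ℕ), (∀ i, m i % 2 = δ i) → m 0 ≤ 1 →
        ∀ i, δ i + 2 * (Fin.cases 0 (fun j => (m j.succ - δ j.succ) / 2) i : ℕ) = m i := by
      intro m hmod h0 i
      induction i using Fin.cases with
      | zero =>
        simp only [Fin.cases_zero]
        have := hmod 0; have := hδ 0; omega
      | succ j =>
        simp only [Fin.cases_succ]
        have := hmod j.succ; have := hδ j.succ; omega
    have rinv : ∀ (c : Fin (k' + 1) → ℕ) (j : Fin (k' + 1)),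
        ((δ j.succ + 2 * (Fin.cases 0 (fun j => c j) j.succ : ℕ)) - δ j.succ) / 2 = c j := by
      intro c j
      simp only [Fin.cases_succ]
      omega
    have toProp : ∀ m : {m : Fin (k' + 2) → ℕ // ∑ i, m i = a ∧ m 0 ≤ 1 ∧ ∀ i, m i % 2 = δ i},
        ∑ j : Fin (k' + 1), (m.1 j.succ - δ j.succ) / 2 = N := by
      rintro ⟨m, hsum, h0, hmod⟩
      clear linv rinv
      have h1 : ∑ i, m i = a := hsum
      rw [Fin.sum_univ_succ] at h1
      have h2 : ∑ j : Fin (k' + 1), m j.succ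
          = ∑ j : Fin (k' + 1), (δ j.succ + 2 * ((m j.succ - δ j.succ) / 2)) := by
        refine Finset.sum_congr rfl fun j _ => ?_
        have := hmod j.succ; have := hδ j.succ; omega
      rw [h2, Finset.sum_add_distrib, ← Finset.mul_sum] at h1
      have hS : ∑ i, δ i = δ 0 + ∑ j : Fin (k' + 1), δ j.succ := Fin.sum_univ_succ _
      have hm0 : m 0 = δ 0 := by have := hmod 0; have := hδ 0; omega
      simp only [hN]
      omega
    have invProp : ∀ c : {c : Fin (k' + 1) → ℕ // ∑ j, c j = N},
        (∑ i, (δ i + 2 * (Fin.cases 0 (fun j => c.1 j) i : ℕ)) = a) ∧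
        (δ 0 + 2 * (Fin.cases 0 (fun j => c.1 j) (0 : Fin (k' + 2)) : ℕ) ≤ 1) ∧
        (∀ i, (δ i + 2 * (Fin.cases 0 (fun j => c.1 j) i : ℕ)) % 2 = δ i) := by
      rintro ⟨c, hc⟩
      clear linv rinv toProp
      refine ⟨?_, ?_, ?_⟩
      · rw [Fin.sum_univ_succ]
        simp only [Fin.cases_zero, Fin.cases_succ]
        rw [Finset.sum_add_distrib, ← Finset.mul_sum, hc]
        have hS : ∑ i, δ i = δ 0 + ∑ j : Fin (k' + 1), δ j.succ := Fin.sum_univ_succ _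
        simp only [hN] at *
        omega
      · simp [hδ 0]
      · intro i
        induction i using Fin.cases with
        | zero => have := hδ 0; simp; omega
        | succ j => simp only [Fin.cases_succ]; have := hδ j.succ; omega
    refine Nat.card_congr
      ⟨fun m => ⟨fun j => (m.1 j.succ - δ j.succ) / 2, toProp m⟩,
       fun c => ⟨fun i => δ i + 2 * (Fin.cases 0 (fun j => c.1 j) i : ℕ),
        (invProp c).1, (invProp c).2.1, (invProp c).2.2⟩, ?_, ?_⟩
    · rintro ⟨m, hsum, h0, hmod⟩
      exact Subtype.ext (funext fun i => linv m hmod h0 i)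
    · rintro ⟨c, hc⟩
      exact Subtype.ext (funext fun j => rinv c j)
  rw [step2, card_sumTuple]
  clear step2
  have h1 : k' + 1 + N - 1 = N + k' := by omega
  have h2 : N + (k' + 2) - 2 = N + k' := by omega
  have h3 : (k' + 2) - 2 = k' := by omega
  rw [h1, h2, h3, Nat.add_comm N k', Nat.choose_symm_add]
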